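/- Let p and q be unit quaternions. The Dirac measure concentrated at p and the Dirac measure concentrated at q are equivalent mixed quantum strategies if and only if q = p or q = -p. -/

import Mathlib

noncomputable section

open MeasureTheory

local notation "ℍ" => Quaternion ℝ

instance : MeasurableSpace (Quaternion ℝ) := borel _
instance : BorelSpace (Quaternion ℝ) := ⟨rfl⟩

/-- The four real coordinates of a quaternion: `p = π₁(p) + π₂(p)i + π₃(p)j + π₄(p)k`. -/
def piQ (t : Fin 4) (p : ℍ) : ℝ := ![p.re, p.imI, p.imJ, p.imK] t

/-- The standard inner product on ℍ ≅ ℝ⁴. -/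
def qinner (p q : ℍ) : ℝ := ∑ t : Fin 4, piQ t p * piQ t q

/-- The quaternions `i`, `j`, `k`. -/
def qI : ℍ := ⟨0, 1, 0, 0⟩
def qJ : ℍ := ⟨0, 0, 1, 0⟩
def qK : ℍ := ⟨0, 0, 0, 1⟩

/-- A mixed quantum strategy: a Borel probability measure on the unit quaternions. -/
def IsMixed (μ : Measure ℍ) : Prop :=
  IsProbabilityMeasure μ ∧ μ {p : ℍ | ‖p‖ = 1} = 1

/-- Quantum payoff with payoff vector `X`: `P^Q(p,q) = Σ_t π_t(pq)² X_t`. -/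
def payoff (X : Fin 4 → ℝ) (p q : ℍ) : ℝ :=
  ∑ t : Fin 4, (piQ t (p * q)) ^ 2 * X t

/-- Expected payoff of a pair of mixed strategies. -/
def payoffM (X : Fin 4 → ℝ) (ν μ : Measure ℍ) : ℝ :=
  ∫ p, ∫ q, payoff X p q ∂μ ∂ν

/-- Mixed-strategy Nash equilibrium of the quantum game with payoff vectors `X`, `Y`. -/
def IsNash (X Y : Fin 4 → ℝ) (ν μ : Measure ℍ) : Prop :=
  IsMixed ν ∧ IsMixed μ ∧
    (∀ ν' : Measure ℍ, IsMixed ν' → payoffM X ν' μ ≤ payoffM X ν μ) ∧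
    (∀ μ' : Measure ℍ, IsMixed μ' → payoffM Y ν μ' ≤ payoffM Y ν μ)

/-- Equivalence of mixed quantum strategies. -/
def StratEquiv (μ μ' : Measure ℍ) : Prop :=
  ∀ p : ℍ, ‖p‖ = 1 → ∀ t : Fin 4,
    ∫ q, (piQ t (p * q)) ^ 2 ∂μ = ∫ q, (piQ t (p * q)) ^ 2 ∂μ'

/-- Equivalence of pairs of mixed strategies: `(ν,μ) ∼ (ν',μ')` iff there is a unit
quaternion `u` with `ν' ∼ ν·u` and `μ' ∼ u⁻¹·μ`. -/
def PairEquiv (ν μ ν' μ' : Measure ℍ) : Prop :=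
  ∃ u : ℍ, ‖u‖ = 1 ∧
    StratEquiv (Measure.map (fun p => p * u) ν) ν' ∧
    StratEquiv (Measure.map (fun q => u⁻¹ * q) μ) μ'

/-- A generic two-by-two game: all payoffs distinct and all pairwise sums distinct. -/
def Generic (X Y : Fin 4 → ℝ) : Prop :=
  Function.Injective X ∧ Function.Injective Y ∧
    (∀ s t s' t' : Fin 4, s < t → s' < t' → X s + X t = X s' + X t' → s = s' ∧ t = t') ∧
    (∀ s t s' t' : Fin 4, s < t → s' < t' → Y s + Y t = Y s' + Y t' → s = s' ∧ t = t')

/-- `K(p) = π₁(p)π₂(p)π₃(p)π₄(p)`. -/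
def K (p : ℍ) : ℝ := p.re * p.imI * p.imJ * p.imK

/-- Intertwined quadruple of quaternions. -/
def Intertwined (p q r s : ℍ) : Prop :=
  ∃ α : ℝ, α ≠ 0 ∧ ∀ X Y : ℝ, α * K (X • p + Y • q) = K (X • r + Y • s)

/-- Fully intertwined quadruple of quaternions. -/
def FullyIntertwined (p q r s : ℍ) : Prop :=
  Intertwined p q r s ∧ Intertwined p r q s

/-- `p` is an optimal response for Player One to the mixed strategy `μ`. -/
def Optimal₁ (X : Fin 4 → ℝ) (μ : Measure ℍ) (p : ℍ) : Prop :=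
  ‖p‖ = 1 ∧ ∀ p' : ℍ, ‖p'‖ = 1 → ∫ q, payoff X p' q ∂μ ≤ ∫ q, payoff X p q ∂μ

/-- `q` is an optimal response for Player Two to the mixed strategy `ν`. -/
def Optimal₂ (Y : Fin 4 → ℝ) (ν : Measure ℍ) (q : ℍ) : Prop :=
  ‖q‖ = 1 ∧ ∀ q' : ℍ, ‖q'‖ = 1 → ∫ p, payoff Y p q' ∂ν ≤ ∫ p, payoff Y p q ∂ν
/-- For unit quaternions `p`, `q`, the Dirac measures at `p` and `q` are
equivalent mixed quantum strategies iff `q = p` or `q = -p`. -/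
lemma piQ_neg (t : Fin 4) (x : ℍ) : piQ t (-x) = - piQ t x := by
  fin_cases t <;> simp [piQ]

theorem dirac_equiv_iff (p q : ℍ) (hp : ‖p‖ = 1) (hq : ‖q‖ = 1) :
    StratEquiv (Measure.dirac p) (Measure.dirac q) ↔ q = p ∨ q = -p := by
  constructor
  · intro h
    have hp0 : p ≠ 0 := by intro h0; rw [h0] at hp; simp at hp
    have hr : ‖(p⁻¹ : ℍ)‖ = 1 := by rw [norm_inv, hp]; norm_num
    have key : ∀ t, (piQ t ((p:ℍ)⁻¹ * p))^2 = (piQ t ((p:ℍ)⁻¹ * q))^2 := by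
      intro t
      have := h p⁻¹ hr t
      simpa [integral_dirac] using this
    set u : ℍ := p⁻¹ * q with hu
    have h1 : (p:ℍ)⁻¹ * p = 1 := inv_mul_cancel₀ hp0
    rw [h1] at key
    have e1 : u.imI = 0 := by
      have := key 1; simp [piQ, Quaternion.re_one, Quaternion.imI_one, Quaternion.imJ_one, Quaternion.imK_one] at this
      exact pow_eq_zero_iff (n := 2) (by norm_num) |>.mp this.symm
    have e2 : u.imJ = 0 := by
      have := key 2; simp [piQ, Quaternion.re_one, Quaternion.imI_one, Quaternion.imJ_one, Quaternion.imK_one] at this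
      exact pow_eq_zero_iff (n := 2) (by norm_num) |>.mp this.symm
    have e3 : u.imK = 0 := by
      have := key 3; simp [piQ, Quaternion.re_one, Quaternion.imI_one, Quaternion.imJ_one, Quaternion.imK_one] at this
      exact pow_eq_zero_iff (n := 2) (by norm_num) |>.mp this.symm
    have e0 : u.re = 1 ∨ u.re = -1 := by
      have h0 := key 0; simp [piQ, Quaternion.re_one, Quaternion.imI_one, Quaternion.imJ_one, Quaternion.imK_one] at h0
      have : (u.re - 1) * (u.re + 1) = 0 := by nlinarith
      rcases mul_eq_zero.mp this with h' | h'
      · left; linarith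
      · right; linarith
    have hq' : q = p * u := (mul_inv_cancel_left₀ hp0 q).symm
    rcases e0 with h' | h'
    · left
      have : u = 1 := by ext <;> simp [h', e1, e2, e3, Quaternion.re_one, Quaternion.imI_one, Quaternion.imJ_one, Quaternion.imK_one]
      rw [hq', this, mul_one]
    · right
      have : u = -1 := by ext <;> simp [h', e1, e2, e3, Quaternion.re_one, Quaternion.imI_one, Quaternion.imJ_one, Quaternion.imK_one]
      rw [hq', this, mul_neg_one]
  · rintro (rfl | rfl)
    · intro r hr t; rfl
    · intro r hr t
      simp [integral_dirac, mul_neg, piQ_neg]
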